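/- If I ⊆ [0, ∞) satisfies the DCC and 0 is not an accumulation point of I \ {0}, then the set I₊ = {0} ∪ {Σ_{k=1}^l i_k ∈ [0,1] : l ≥ 1, i_k ∈ I} satisfies the DCC. -/
import Mathlib

open Pointwise


def IsDCC (S : Set ℝ) : Prop :=
  ∀ f : ℕ → ℝ, (∀ n, f n ∈ S) → Antitone f → ∃ N, ∀ n, N ≤ n → f n = f N

def IsACC (S : Set ℝ) : Prop :=
  ∀ f : ℕ → ℝ, (∀ n, f n ∈ S) → Monotone f → ∃ N, ∀ n, N ≤ n → f n = f N
def IPlus (I : Set ℝ) : Set ℝ :=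
  {0} ∪ {s : ℝ | ∃ l : ℕ, 1 ≤ l ∧ ∃ i : Fin l → ℝ, (∀ k, i k ∈ I) ∧
    s = ∑ k, i k ∧ 0 ≤ s ∧ s ≤ 1}

/-- iterated sumset -/
def sumIter (J : Set ℝ) : ℕ → Set ℝ
  | 0 => {0}
  | m + 1 => J + sumIter J m

lemma sumIter_isWF {J : Set ℝ} (hJ : J.IsWF) : ∀ m, (sumIter J m).IsWF
  | 0 => (Set.finite_singleton 0).isWF
  | m + 1 => by rw [sumIter]; exact hJ.add (sumIter_isWF hJ m)

lemma zero_mem_sumIter {J : Set ℝ} (h0 : (0 : ℝ) ∈ J) : ∀ m, (0 : ℝ) ∈ sumIter J m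
  | 0 => rfl
  | m + 1 => by
      rw [sumIter]
      have := Set.add_mem_add h0 (zero_mem_sumIter h0 m)
      simpa using this

lemma sum_mem_sumIter {J : Set ℝ} (h0 : (0 : ℝ) ∈ J) :
    ∀ (m : ℕ) {ι : Type} (F : Finset ι) (i : ι → ℝ), F.card ≤ m →
      (∀ k ∈ F, i k ∈ J) → ∑ k ∈ F, i k ∈ sumIter J m := by
  intro m
  induction m with
  | zero =>
    intro ι F i hc _
    have : F = ∅ := Finset.card_eq_zero.mp (Nat.le_zero.mp hc)
    simp [this, sumIter]
  | succ m ih =>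
    intro ι F i hc hmem
    rcases F.eq_empty_or_nonempty with rfl | ⟨k, hk⟩
    · simpa [sumIter] using zero_mem_sumIter h0 (m + 1)
    · classical
      have hsum : ∑ x ∈ F, i x = i k + ∑ x ∈ F.erase k, i x :=
        (Finset.add_sum_erase F i hk).symm
      rw [hsum, sumIter]
      exact Set.add_mem_add (hmem k hk)
        (ih (F.erase k) i
          (by
            have := Finset.card_erase_of_mem hk
            omega)
          (fun x hx => hmem x (Finset.mem_of_mem_erase hx)))

lemma isDCC_of_isWF {S : Set ℝ} (h : S.IsWF) : IsDCC S := by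
  intro f hf hanti
  have hR : (Set.range f).IsWF := h.mono (Set.range_subset_iff.mpr hf)
  have hne : (Set.range f).Nonempty := ⟨f 0, Set.mem_range_self 0⟩
  obtain ⟨m, hm⟩ := hR.min_mem hne
  refine ⟨m, fun n hn => ?_⟩
  have h1 : f n ≤ f m := hanti hn
  have h2 : ¬ f n < hR.min hne := hR.not_lt_min hne (Set.mem_range_self n)
  rw [← hm] at h2
  exact le_antisymm h1 (not_lt.mp h2)

theorem dcc_iplus (I : Set ℝ) (hI0 : I ⊆ Set.Ici 0) (hI : IsDCC I)
    (h0 : ¬ AccPt (0 : ℝ) (Filter.principal (I \ {0}))) : IsDCC (IPlus I) := by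
  -- extract ε > 0 with every nonzero element of I at least ε
  rw [accPt_iff_nhds] at h0
  push_neg at h0
  obtain ⟨U, hU, hUe⟩ := h0
  obtain ⟨ε, hε, hball⟩ := Metric.mem_nhds_iff.mp hU
  have hlow : ∀ x ∈ I, x ≠ 0 → ε ≤ x := by
    intro x hx hx0
    by_contra hlt
    push_neg at hlt
    have hx0' : 0 ≤ x := hI0 hx
    have hxb : x ∈ Metric.ball (0 : ℝ) ε := by
      simp [Real.norm_eq_abs, abs_of_nonneg hx0', hlt]
    exact hx0 (hUe x ⟨hball hxb, hx, hx0⟩)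
  -- I is well-founded
  have hIwf : I.IsWF := by
    rw [Set.isWF_iff_no_descending_seq]
    intro f hf hmem
    obtain ⟨N, hN⟩ := hI f hmem hf.antitone
    exact absurd (hN (N + 1) (Nat.le_succ N)) (ne_of_lt (hf (Nat.lt_succ_self N)))
  -- the building-block set
  set J : Set ℝ := (I ∩ Set.Icc 0 1) ∪ {0} with hJdef
  have hJwf : J.IsWF := (hIwf.mono Set.inter_subset_left).union (Set.finite_singleton 0).isWF
  have h0J : (0 : ℝ) ∈ J := Or.inr rfl
  -- choose n with 1 < n * ε
  obtain ⟨n, hn⟩ := exists_nat_gt (1 / ε)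
  have hnε : 1 < (n : ℝ) * ε := by
    rw [div_lt_iff₀ hε] at hn
    linarith
  -- IPlus I ⊆ sumIter J n
  have hsub : IPlus I ⊆ sumIter J n := by
    rintro s (rfl | ⟨l, hl, i, hiI, rfl, hs0, hs1⟩)
    · exact zero_mem_sumIter h0J n
    · classical
      set F : Finset (Fin l) := Finset.univ.filter (fun k => i k ≠ 0) with hF
      have hFsum : ∑ k ∈ F, i k = ∑ k, i k := Finset.sum_filter_ne_zero _
      -- each term is ≤ the total sum, hence in J
      have hterm : ∀ k ∈ F, i k ∈ J := by
        intro k hk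
        have hle : i k ≤ ∑ j, i j :=
          Finset.single_le_sum (fun j _ => hI0 (hiI j)) (Finset.mem_univ k)
        exact Or.inl ⟨hiI k, hI0 (hiI k), le_trans hle hs1⟩
      -- card bound
      have hcard : F.card ≤ n := by
        have h1 : F.card • ε ≤ ∑ k ∈ F, i k :=
          Finset.card_nsmul_le_sum F i ε
            (fun k hk => hlow (i k) (hiI k) (Finset.mem_filter.mp hk).2)
        rw [hFsum] at h1
        have h2 : (F.card : ℝ) * ε ≤ 1 := by
          simpa [nsmul_eq_mul] using le_trans h1 hs1
        by_contra hcn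
        push_neg at hcn
        have : (n : ℝ) * ε < (F.card : ℝ) * ε :=
          mul_lt_mul_of_pos_right (by exact_mod_cast hcn) hε
        linarith
      rw [← hFsum]
      exact sum_mem_sumIter h0J n F i hcard hterm
  exact isDCC_of_isWF ((sumIter_isWF hJwf n).mono hsub)
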